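/- Let n ≥ 1, β ∈ (0,1), and N ≥ max(2n/(1-β), 3) an integer. Let M_1,...,M_n be independent, with M_k negative binomial on {N, N+1,...} with success probability α_k ∈ (0,1], i.e. P(M_k=m) = C(m-1,N-1)α_k^N(1-α_k)^{m-N}. Then E[(∏_{k=1}^n (1/(M_k-1)) / ∏_{k=1}^n (α_k/(N-1)) − 1)²] ≤ n/(β N). -/

import Mathlib

/-- pmf of the negative binomial number of trials `M = N + m` needed to obtain
`N` successes with success probability `α`. -/
noncomputable def nbTrialsPMF (N : ℕ) (α : ℝ) (m : ℕ) : ℝ :=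
  (Nat.choose (N + m - 1) (N - 1) : ℝ) * α ^ N * (1 - α) ^ m


private lemma natId1 (N m : ℕ) (hN : 2 ≤ N) :
    (N + m - 1) * Nat.choose (m + (N - 2)) (N - 2) =
      (N - 1) * Nat.choose (m + (N - 1)) (N - 1) := by
  have h := Nat.add_one_mul_choose_eq (m + (N - 2)) (N - 2)
  rw [show m + (N - 2) + 1 = N + m - 1 by omega,
      show N - 2 + 1 = N - 1 by omega] at h
  have hc : (N + m - 1).choose (N - 1) = (m + (N - 1)).choose (N - 1) := by
    rw [show N + m - 1 = m + (N - 1) by omega]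
  rw [hc] at h
  rw [h]; ring

private lemma natId2 (N m : ℕ) (hN : 3 ≤ N) :
    ((N + m - 1) * (N + m - 2)) * Nat.choose (m + (N - 3)) (N - 3) =
      ((N - 1) * (N - 2)) * Nat.choose (m + (N - 1)) (N - 1) := by
  have h1 := natId1 N m (by omega)
  have h2 := natId1 (N - 1) m (by omega)
  rw [show N - 1 + m - 1 = N + m - 2 by omega, show N - 1 - 2 = N - 3 by omega,
      show N - 1 - 1 = N - 2 by omega] at h2
  calc ((N + m - 1) * (N + m - 2)) * Nat.choose (m + (N - 3)) (N - 3)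
      = (N + m - 1) * ((N + m - 2) * Nat.choose (m + (N - 3)) (N - 3)) := by ring
    _ = (N + m - 1) * ((N - 2) * Nat.choose (m + (N - 2)) (N - 2)) := by rw [h2]
    _ = (N - 2) * ((N + m - 1) * Nat.choose (m + (N - 2)) (N - 2)) := by ring
    _ = (N - 2) * ((N - 1) * Nat.choose (m + (N - 1)) (N - 1)) := by rw [h1]
    _ = ((N - 1) * (N - 2)) * Nat.choose (m + (N - 1)) (N - 1) := by ring

set_option maxHeartbeats 1000000 in
private lemma hasSum_pi_prod : ∀ (n : ℕ) (g : Fin n → ℕ → ℝ) (s : Fin n → ℝ),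
    (∀ k m, 0 ≤ g k m) → (∀ k, HasSum (g k) (s k)) →
    HasSum (fun m : Fin n → ℕ => ∏ k, g k (m k)) (∏ k, s k) := by
  intro n
  induction n with
  | zero =>
      intro g s _ _
      simp only [Finset.univ_eq_empty, Finset.prod_empty]
      exact hasSum_single (f := fun _ : Fin 0 → ℕ => (1 : ℝ)) default
        (fun b hb => absurd (Subsingleton.elim b default) hb)
  | succ n ih =>
      intro g s hg0 hg
      have hrest := ih (fun k : Fin n => g k.succ) (fun k : Fin n => s k.succ)
        (fun k m => hg0 _ _) (fun k => hg _)
      have h0 : ∀ m, 0 ≤ g 0 m := fun m => hg0 0 m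
      have hrest0 : ∀ v : Fin n → ℕ, 0 ≤ ∏ k : Fin n, g k.succ (v k) :=
        fun v => Finset.prod_nonneg fun k _ => hg0 _ _
      have hs := (hg 0).summable.mul_of_nonneg hrest.summable h0 hrest0
      have hmul := (hg 0).mul hrest hs
      rw [Fin.prod_univ_succ]
      refine (Equiv.hasSum_iff (Fin.consEquiv fun _ => ℕ)).mp ?_
      convert hmul using 1
      · rfl
      funext p
      simp only [Function.comp_apply, Fin.consEquiv_apply]
      rw [Fin.prod_univ_succ]
      simp [Fin.cons_zero, Fin.cons_succ]




section NB
variable {N : ℕ} {α : ℝ} (hN : 3 ≤ N) (hα0 : 0 < α) (hα1 : α ≤ 1)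
include hN hα0 hα1

private lemma hq_norm : ‖1 - α‖ < 1 := by
  rw [Real.norm_eq_abs, abs_lt]; constructor <;> linarith

private lemma nb_hasSum_one : HasSum (nbTrialsPMF N α) 1 := by
  have h := (hasSum_choose_mul_geometric_of_norm_lt_one (𝕜 := ℝ) (N - 1)
    (hq_norm hN hα0 hα1)).mul_left (α ^ N)
  have hval : α ^ N * (1 / (1 - (1 - α)) ^ (N - 1 + 1)) = 1 := by
    rw [show N - 1 + 1 = N by omega, sub_sub_cancel]
    field_simp
  rw [hval] at h
  convert h using 1
  · rfl
  funext m
  unfold nbTrialsPMF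
  rw [show N + m - 1 = m + (N - 1) by omega]
  ring

private lemma nb_hasSum_inv :
    HasSum (fun m => nbTrialsPMF N α m * (1 / ((N : ℝ) + m - 1)))
      (α / ((N : ℝ) - 1)) := by
  have h := (hasSum_choose_mul_geometric_of_norm_lt_one (𝕜 := ℝ) (N - 2)
    (hq_norm hN hα0 hα1)).mul_left (α ^ N / ((N : ℝ) - 1))
  have hval : α ^ N / ((N : ℝ) - 1) * (1 / (1 - (1 - α)) ^ (N - 2 + 1)) = α / ((N : ℝ) - 1) := by
    rw [show N - 2 + 1 = N - 1 by omega, sub_sub_cancel]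
    have hNR : (0:ℝ) < (N : ℝ) - 1 := by
      have : (3:ℝ) ≤ N := by exact_mod_cast hN
      linarith
    have hpow : α ^ N = α * α ^ (N - 1) := by
      rw [← pow_succ', show N - 1 + 1 = N by omega]
    rw [hpow]
    field_simp
  rw [hval] at h
  convert h using 1
  · rfl
  funext m
  have hcast1 : ((N + m - 1 : ℕ) : ℝ) = (N : ℝ) + m - 1 := by
    have : 1 ≤ N + m := by omega
    push_cast [this]; ring
  have hcast2 : ((N - 1 : ℕ) : ℝ) = (N : ℝ) - 1 := by
    have : 1 ≤ N := by omega
    push_cast [this]; ring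
  have hid : ((N : ℝ) + m - 1) * ((m + (N - 2)).choose (N - 2) : ℝ)
      = ((N : ℝ) - 1) * ((m + (N - 1)).choose (N - 1) : ℝ) := by
    rw [← hcast1, ← hcast2]
    exact_mod_cast congrArg (fun x : ℕ => (x : ℝ))
      (natId1 N m (by omega))
  have ha : (0:ℝ) < (N : ℝ) + m - 1 := by
    have h3 : (3:ℝ) ≤ N := by exact_mod_cast hN
    have : (0:ℝ) ≤ m := Nat.cast_nonneg m
    linarith
  have hb : (0:ℝ) < (N : ℝ) - 1 := by
    have h3 : (3:ℝ) ≤ N := by exact_mod_cast hN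
    linarith
  have key : ((m + (N - 1)).choose (N - 1) : ℝ) / ((N : ℝ) + m - 1)
      = ((m + (N - 2)).choose (N - 2) : ℝ) / ((N : ℝ) - 1) := by
    rw [div_eq_div_iff ha.ne' hb.ne']
    linarith [hid]
  unfold nbTrialsPMF
  rw [show N + m - 1 = m + (N - 1) by omega]
  calc ((m + (N - 1)).choose (N - 1) : ℝ) * α ^ N * (1 - α) ^ m * (1 / ((N : ℝ) + m - 1))
      = α ^ N * (1 - α) ^ m * (((m + (N - 1)).choose (N - 1) : ℝ) / ((N : ℝ) + m - 1)) := by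
        ring
    _ = α ^ N * (1 - α) ^ m * (((m + (N - 2)).choose (N - 2) : ℝ) / ((N : ℝ) - 1)) := by
        rw [key]
    _ = α ^ N / ((N : ℝ) - 1) * (((m + (N - 2)).choose (N - 2) : ℝ) * (1 - α) ^ m) := by
        ring

private lemma nb_hasSum_inv2 :
    HasSum (fun m => nbTrialsPMF N α m * (1 / (((N : ℝ) + m - 1) * ((N : ℝ) + m - 2))))
      (α ^ 2 / (((N : ℝ) - 1) * ((N : ℝ) - 2))) := by
  have h := (hasSum_choose_mul_geometric_of_norm_lt_one (𝕜 := ℝ) (N - 3)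
    (hq_norm hN hα0 hα1)).mul_left (α ^ N / (((N : ℝ) - 1) * ((N : ℝ) - 2)))
  have hval : α ^ N / (((N : ℝ) - 1) * ((N : ℝ) - 2)) * (1 / (1 - (1 - α)) ^ (N - 3 + 1))
      = α ^ 2 / (((N : ℝ) - 1) * ((N : ℝ) - 2)) := by
    rw [show N - 3 + 1 = N - 2 by omega, sub_sub_cancel]
    have h3 : (3:ℝ) ≤ N := by exact_mod_cast hN
    have hpow : α ^ N = α ^ 2 * α ^ (N - 2) := by
      rw [← pow_add, show 2 + (N - 2) = N by omega]
    rw [hpow]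
    have h1 : (0:ℝ) < (N : ℝ) - 1 := by linarith
    have h2 : (0:ℝ) < (N : ℝ) - 2 := by linarith
    field_simp
  rw [hval] at h
  convert h using 1
  · rfl
  funext m
  have hcast1 : ((N + m - 1 : ℕ) : ℝ) = (N : ℝ) + m - 1 := by
    have : 1 ≤ N + m := by omega
    push_cast [this]; ring
  have hcast1' : ((N + m - 2 : ℕ) : ℝ) = (N : ℝ) + m - 2 := by
    have : 2 ≤ N + m := by omega
    push_cast [this]; ring
  have hcast2 : ((N - 1 : ℕ) : ℝ) = (N : ℝ) - 1 := by
    have : 1 ≤ N := by omega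
    push_cast [this]; ring
  have hcast2' : ((N - 2 : ℕ) : ℝ) = (N : ℝ) - 2 := by
    have : 2 ≤ N := by omega
    push_cast [this]; ring
  have hid : (((N : ℝ) + m - 1) * ((N : ℝ) + m - 2)) * ((m + (N - 3)).choose (N - 3) : ℝ)
      = (((N : ℝ) - 1) * ((N : ℝ) - 2)) * ((m + (N - 1)).choose (N - 1) : ℝ) := by
    rw [← hcast1, ← hcast1', ← hcast2, ← hcast2']
    exact_mod_cast congrArg (fun x : ℕ => (x : ℝ))
      (natId2 N m hN)
  have h3 : (3:ℝ) ≤ N := by exact_mod_cast hN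
  have hm0 : (0:ℝ) ≤ m := Nat.cast_nonneg m
  have ha : (0:ℝ) < (N : ℝ) + m - 1 := by linarith
  have ha' : (0:ℝ) < (N : ℝ) + m - 2 := by linarith
  have hb : (0:ℝ) < (N : ℝ) - 1 := by linarith
  have hb' : (0:ℝ) < (N : ℝ) - 2 := by linarith
  have key : ((m + (N - 1)).choose (N - 1) : ℝ) / (((N : ℝ) + m - 1) * ((N : ℝ) + m - 2))
      = ((m + (N - 3)).choose (N - 3) : ℝ) / (((N : ℝ) - 1) * ((N : ℝ) - 2)) := by
    rw [div_eq_div_iff (by positivity) (by positivity)]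
    linarith [hid]
  unfold nbTrialsPMF
  rw [show N + m - 1 = m + (N - 1) by omega]
  calc ((m + (N - 1)).choose (N - 1) : ℝ) * α ^ N * (1 - α) ^ m *
        (1 / (((N : ℝ) + m - 1) * ((N : ℝ) + m - 2)))
      = α ^ N * (1 - α) ^ m * (((m + (N - 1)).choose (N - 1) : ℝ) /
          (((N : ℝ) + m - 1) * ((N : ℝ) + m - 2))) := by ring
    _ = α ^ N * (1 - α) ^ m * (((m + (N - 3)).choose (N - 3) : ℝ) /
          (((N : ℝ) - 1) * ((N : ℝ) - 2))) := by rw [key]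
    _ = α ^ N / (((N : ℝ) - 1) * ((N : ℝ) - 2)) *
          (((m + (N - 3)).choose (N - 3) : ℝ) * (1 - α) ^ m) := by ring

end NB

private lemma key1 (c : ℝ) (hc : 3 ≤ c) : ∀ n : ℕ, (c - 1) ^ n * (c - 2 - n) ≤ (c - 2) ^ (n + 1) := by
  intro n
  induction n with
  | zero => simp
  | succ n ih =>
    have hn0 : (0:ℝ) ≤ n := Nat.cast_nonneg n
    have h1 : (c - 1) * (c - 2 - ((n:ℝ) + 1)) ≤ (c - 2) * (c - 2 - n) := by nlinarith
    calc (c - 1) ^ (n + 1) * (c - 2 - ((n + 1 : ℕ) : ℝ))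
        = (c - 1) ^ n * ((c - 1) * (c - 2 - ((n:ℝ) + 1))) := by push_cast; ring
      _ ≤ (c - 1) ^ n * ((c - 2) * (c - 2 - n)) :=
          mul_le_mul_of_nonneg_left h1 (pow_nonneg (by linarith) n)
      _ = (c - 2) * ((c - 1) ^ n * (c - 2 - n)) := by ring
      _ ≤ (c - 2) * (c - 2) ^ (n + 1) := mul_le_mul_of_nonneg_left ih (by linarith)
      _ = (c - 2) ^ (n + 1 + 1) := by ring

private lemma final_ineq (n : ℕ) (hn : 1 ≤ n) (β c : ℝ) (hβ0 : 0 < β)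
    (hc3 : 3 ≤ c) (h2n : 2 * n ≤ (1 - β) * c) :
    ((c - 1) / (c - 2)) ^ n ≤ 1 + n / (β * c) := by
  have hc2 : (0:ℝ) < c - 2 := by linarith
  have hn1 : (1:ℝ) ≤ n := by exact_mod_cast hn
  have hβc : 0 < β * c := mul_pos hβ0 (by linarith)
  have hexp : (1 - β) * c = c - β * c := by ring
  rw [hexp] at h2n
  have hβc' : β * c ≤ c - 1 - n := by linarith
  have hden : (0:ℝ) < c - 1 - n := by linarith
  have hkey := key1 c hc3 (n - 1)
  have hc1 : ((n - 1 : ℕ) : ℝ) = (n : ℝ) - 1 := by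
    rw [Nat.cast_sub hn]; simp
  rw [hc1, show n - 1 + 1 = n by omega] at hkey
  rw [div_pow, div_le_iff₀ (pow_pos hc2 n)]
  have hfac : (c - 1) ^ n = (c - 1) ^ (n - 1) * (c - 1) := by
    rw [← pow_succ, show n - 1 + 1 = n by omega]
  have h1 : (n:ℝ) ≤ n / (β * c) * (c - 1 - n) := by
    rw [div_mul_eq_mul_div, le_div_iff₀ hβc]
    nlinarith
  have hstep : c - 1 ≤ (1 + n / (β * c)) * (c - 1 - n) := by
    have hx : (1 + (n:ℝ) / (β * c)) * (c - 1 - n) = (c - 1 - n) + n / (β * c) * (c - 1 - n) := by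
      ring
    rw [hx]; linarith
  calc (c - 1) ^ n = (c - 1) ^ (n - 1) * (c - 1) := hfac
    _ ≤ (c - 1) ^ (n - 1) * ((1 + n / (β * c)) * (c - 1 - n)) :=
        mul_le_mul_of_nonneg_left hstep (pow_nonneg (by linarith) _)
    _ = (1 + n / (β * c)) * ((c - 1) ^ (n - 1) * (c - 2 - ((n:ℝ) - 1))) := by ring
    _ ≤ (1 + n / (β * c)) * (c - 2) ^ n := by
        apply mul_le_mul_of_nonneg_left hkey
        positivity

/-- Relative variance bound for the product of independent negative binomial
estimators: if `N ≥ max(2n/(1-β), 3)` then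
`E[(∏_k (1/(M_k-1)) / ∏_k (α_k/(N-1)) - 1)²] ≤ n/(βN)`. -/
theorem nb_product_relative_variance_le (n : ℕ) (hn : 1 ≤ n)
    (β : ℝ) (hβ0 : 0 < β) (hβ1 : β < 1)
    (N : ℕ) (hN1 : 2 * (n : ℝ) / (1 - β) ≤ N) (hN2 : 3 ≤ N)
    (α : Fin n → ℝ) (hα0 : ∀ k, 0 < α k) (hα1 : ∀ k, α k ≤ 1) :
    ∑' m : Fin n → ℕ,
        (∏ k, nbTrialsPMF N (α k) (m k)) *
          ((∏ k, (1 : ℝ) / ((N : ℝ) + m k - 1)) / (∏ k, α k / ((N : ℝ) - 1)) - 1) ^ 2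
      ≤ (n : ℝ) / (β * N) := by
  classical
  have hβ' : (0:ℝ) < 1 - β := by linarith
  have h2n : 2 * (n:ℝ) ≤ (1 - β) * N := by
    rw [div_le_iff₀ hβ'] at hN1; linarith
  have h3 : (3:ℝ) ≤ (N:ℝ) := by exact_mod_cast hN2
  have hb : (0:ℝ) < (N:ℝ) - 1 := by linarith
  have hb' : (0:ℝ) < (N:ℝ) - 2 := by linarith
  -- nonnegativity of the pmf
  have hf0 : ∀ (k : Fin n) (m : ℕ), 0 ≤ nbTrialsPMF N (α k) m := by
    intro k m
    unfold nbTrialsPMF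
    have h1 := hα0 k
    have h2 := hα1 k
    exact mul_nonneg (mul_nonneg (Nat.cast_nonneg _) (pow_nonneg h1.le _))
      (pow_nonneg (by linarith) _)
  -- per-coordinate sums
  have hfS : ∀ k, HasSum (nbTrialsPMF N (α k)) 1 :=
    fun k => nb_hasSum_one hN2 (hα0 k) (hα1 k)
  have hgS : ∀ k, HasSum (fun m : ℕ => nbTrialsPMF N (α k) m * (1 / ((N:ℝ) + m - 1)))
      (α k / ((N:ℝ) - 1)) := fun k => nb_hasSum_inv hN2 (hα0 k) (hα1 k)
  have h2S : ∀ k, HasSum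
      (fun m : ℕ => nbTrialsPMF N (α k) m * (1 / (((N:ℝ) + m - 1) * ((N:ℝ) + m - 2))))
      (α k ^ 2 / (((N:ℝ) - 1) * ((N:ℝ) - 2))) :=
    fun k => nb_hasSum_inv2 hN2 (hα0 k) (hα1 k)
  -- the second-moment coordinate function
  have hh0 : ∀ (k : Fin n) (m : ℕ), 0 ≤ nbTrialsPMF N (α k) m * (1 / ((N:ℝ) + m - 1)) ^ 2 := by
    intro k m
    have hm0 : (0:ℝ) ≤ m := Nat.cast_nonneg m
    have ha : (0:ℝ) < (N:ℝ) + m - 1 := by linarith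
    exact mul_nonneg (hf0 k m) (by positivity)
  have hhle : ∀ (k : Fin n) (m : ℕ),
      nbTrialsPMF N (α k) m * (1 / ((N:ℝ) + m - 1)) ^ 2 ≤
        nbTrialsPMF N (α k) m * (1 / (((N:ℝ) + m - 1) * ((N:ℝ) + m - 2))) := by
    intro k m
    have hm0 : (0:ℝ) ≤ m := Nat.cast_nonneg m
    have ha : (0:ℝ) < (N:ℝ) + m - 1 := by linarith
    have ha' : (0:ℝ) < (N:ℝ) + m - 2 := by linarith
    apply mul_le_mul_of_nonneg_left _ (hf0 k m)
    rw [div_pow, one_pow]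
    apply one_div_le_one_div_of_le (by positivity)
    nlinarith
  have hhsum : ∀ k, Summable (fun m : ℕ => nbTrialsPMF N (α k) m * (1 / ((N:ℝ) + m - 1)) ^ 2) :=
    fun k => Summable.of_nonneg_of_le (hh0 k) (hhle k) (h2S k).summable
  set s : Fin n → ℝ := fun k => ∑' m : ℕ, nbTrialsPMF N (α k) m * (1 / ((N:ℝ) + m - 1)) ^ 2
    with hs_def
  have hsS : ∀ k, HasSum (fun m : ℕ => nbTrialsPMF N (α k) m * (1 / ((N:ℝ) + m - 1)) ^ 2) (s k) :=
    fun k => (hhsum k).hasSum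
  have hs0 : ∀ k, 0 ≤ s k := fun k => tsum_nonneg (hh0 k)
  have hsle : ∀ k, s k ≤ α k ^ 2 / (((N:ℝ) - 1) * ((N:ℝ) - 2)) := by
    intro k
    rw [hs_def, ← (h2S k).tsum_eq]
    exact (hhsum k).tsum_le_tsum (hhle k) (h2S k).summable
  -- products over coordinates
  have hg0 : ∀ (k : Fin n) (m : ℕ), 0 ≤ nbTrialsPMF N (α k) m * (1 / ((N:ℝ) + m - 1)) := by
    intro k m
    have hm0 : (0:ℝ) ≤ m := Nat.cast_nonneg m
    have ha : (0:ℝ) < (N:ℝ) + m - 1 := by linarith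
    exact mul_nonneg (hf0 k m) (by positivity)
  have HF : HasSum (fun m : Fin n → ℕ => ∏ k, nbTrialsPMF N (α k) (m k)) 1 := by
    have := hasSum_pi_prod n (fun k m => nbTrialsPMF N (α k) m) (fun _ => 1) hf0 hfS
    simpa using this
  have HG : HasSum (fun m : Fin n → ℕ =>
      ∏ k, nbTrialsPMF N (α k) (m k) * (1 / ((N:ℝ) + m k - 1)))
      (∏ k, α k / ((N:ℝ) - 1)) := by
    exact hasSum_pi_prod n (fun k m => nbTrialsPMF N (α k) m * (1 / ((N:ℝ) + m - 1)))
      (fun k => α k / ((N:ℝ) - 1)) hg0 hgS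
  have HH : HasSum (fun m : Fin n → ℕ =>
      ∏ k, nbTrialsPMF N (α k) (m k) * (1 / ((N:ℝ) + m k - 1)) ^ 2)
      (∏ k, s k) := by
    exact hasSum_pi_prod n (fun k m => nbTrialsPMF N (α k) m * (1 / ((N:ℝ) + m - 1)) ^ 2)
      s hh0 hsS
  have hμ : (0:ℝ) < ∏ k, α k / ((N:ℝ) - 1) :=
    Finset.prod_pos fun k _ => div_pos (hα0 k) hb
  set μ : ℝ := ∏ k, α k / ((N:ℝ) - 1) with hμ_def
  -- combine
  have Htot : HasSum (fun m : Fin n → ℕ =>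
      (∏ k, nbTrialsPMF N (α k) (m k) * (1 / ((N:ℝ) + m k - 1)) ^ 2) / μ ^ 2
        - 2 * ((∏ k, nbTrialsPMF N (α k) (m k) * (1 / ((N:ℝ) + m k - 1))) / μ)
        + ∏ k, nbTrialsPMF N (α k) (m k))
      ((∏ k, s k) / μ ^ 2 - 2 * (μ / μ) + 1) :=
    ((HH.div_const (μ ^ 2)).sub ((HG.div_const μ).mul_left 2)).add HF
  have hfun : ∀ m : Fin n → ℕ,
      (∏ k, nbTrialsPMF N (α k) (m k) * (1 / ((N:ℝ) + m k - 1)) ^ 2) / μ ^ 2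
        - 2 * ((∏ k, nbTrialsPMF N (α k) (m k) * (1 / ((N:ℝ) + m k - 1))) / μ)
        + ∏ k, nbTrialsPMF N (α k) (m k)
      = (∏ k, nbTrialsPMF N (α k) (m k)) *
          ((∏ k, (1 : ℝ) / ((N : ℝ) + m k - 1)) / μ - 1) ^ 2 := by
    intro m
    have e2 : ∏ k, nbTrialsPMF N (α k) (m k) * (1 / ((N:ℝ) + m k - 1))
        = (∏ k, nbTrialsPMF N (α k) (m k)) * ∏ k, (1:ℝ) / ((N:ℝ) + m k - 1) := by
      rw [← Finset.prod_mul_distrib]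
    have e3 : ∏ k, nbTrialsPMF N (α k) (m k) * (1 / ((N:ℝ) + m k - 1)) ^ 2
        = (∏ k, nbTrialsPMF N (α k) (m k)) * (∏ k, (1:ℝ) / ((N:ℝ) + m k - 1)) ^ 2 := by
      rw [← Finset.prod_pow, ← Finset.prod_mul_distrib]
    rw [e2, e3]
    field_simp
    ring
  have Hsum : HasSum (fun m : Fin n → ℕ =>
      (∏ k, nbTrialsPMF N (α k) (m k)) *
        ((∏ k, (1 : ℝ) / ((N : ℝ) + m k - 1)) / μ - 1) ^ 2)
      ((∏ k, s k) / μ ^ 2 - 2 * (μ / μ) + 1) := by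
    rw [show (fun m : Fin n → ℕ =>
      (∏ k, nbTrialsPMF N (α k) (m k)) *
        ((∏ k, (1 : ℝ) / ((N : ℝ) + m k - 1)) / μ - 1) ^ 2) = fun m : Fin n → ℕ =>
      (∏ k, nbTrialsPMF N (α k) (m k) * (1 / ((N:ℝ) + m k - 1)) ^ 2) / μ ^ 2
        - 2 * ((∏ k, nbTrialsPMF N (α k) (m k) * (1 / ((N:ℝ) + m k - 1))) / μ)
        + ∏ k, nbTrialsPMF N (α k) (m k) from funext fun m => (hfun m).symm]
    exact Htot
  rw [Hsum.tsum_eq]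
  -- now bound the value
  have hμμ : μ / μ = 1 := div_self hμ.ne'
  have hprod : (∏ k, s k) / μ ^ 2 = ∏ k, s k / (α k / ((N:ℝ) - 1)) ^ 2 := by
    rw [hμ_def, ← Finset.prod_pow, ← Finset.prod_div_distrib]
  have hfactor : ∀ k : Fin n, s k / (α k / ((N:ℝ) - 1)) ^ 2 ≤ ((N:ℝ) - 1) / ((N:ℝ) - 2) := by
    intro k
    have hαk := hα0 k
    have h1 : s k / (α k / ((N:ℝ) - 1)) ^ 2
        ≤ (α k ^ 2 / (((N:ℝ) - 1) * ((N:ℝ) - 2))) / (α k / ((N:ℝ) - 1)) ^ 2 := by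
      gcongr
      exact hsle k
    have h2 : (α k ^ 2 / (((N:ℝ) - 1) * ((N:ℝ) - 2))) / (α k / ((N:ℝ) - 1)) ^ 2
        = ((N:ℝ) - 1) / ((N:ℝ) - 2) := by
      field_simp
    linarith [h1, h2.le, h2.ge]
  have hprodle : (∏ k, s k / (α k / ((N:ℝ) - 1)) ^ 2) ≤ (((N:ℝ) - 1) / ((N:ℝ) - 2)) ^ n := by
    calc (∏ k, s k / (α k / ((N:ℝ) - 1)) ^ 2)
        ≤ ∏ _k : Fin n, ((N:ℝ) - 1) / ((N:ℝ) - 2) := by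
          apply Finset.prod_le_prod
          · intro k _
            have : (0:ℝ) < (α k / ((N:ℝ) - 1)) ^ 2 :=
              pow_pos (div_pos (hα0 k) hb) 2
            exact div_nonneg (hs0 k) this.le
          · intro k _
            exact hfactor k
      _ = (((N:ℝ) - 1) / ((N:ℝ) - 2)) ^ n := by
          rw [Finset.prod_const, Finset.card_univ, Fintype.card_fin]
  have hfinal := final_ineq n hn β (N:ℝ) hβ0 h3 h2n
  rw [hμμ]
  rw [hprod]
  linarith [hprodle, hfinal]
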